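/- arXiv:1808.10828 — 3 statements merged into one kernel-verified Lean document; each statement's English description precedes it below -/
import Mathlib

section
/- Let C be a copula lying in the copula domain of attraction of the extreme-value copula C_∞ associated with the stable tail dependence function L, with L ≠ L_∨ where L_∨(x) = max(x_1,…,x_d). Suppose Condition (SO)_b holds with continuous non-null S_b, α_b regularly varying of index ρ_b ≤ 0, and 2r·α_b(r) → 0 as r → ∞. Then: (i) for every x ∈ [0,∞)^d, 2t·(t(1 − C(1 − x/t)) − L(x)) → Γ₁(x) − L(x)² as t → ∞, and this limit function is not identically zero; (ii) this convergence is uniform on [0,T]^d for every T > 0 if and only if Γ₁ is continuous on [0,∞)^d. In particular, Condition (SO)_p holds (with the choice α_p(t) = 1/(2t) and S_p(x) = Γ₁(x) − L(x)²) if and only if Γ₁ is continuous. -/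
open Filter Topology

noncomputable section

/-- A `d`-variate stable tail dependence function: homogeneous of order 1, convex,
`L(e_j) = 1`, and `max ≤ L ≤ sum` on the nonnegative orthant. -/
def IsSTDF (d : ℕ) (L : (Fin d → ℝ) → ℝ) : Prop :=
  (∀ s : ℝ, 0 < s → ∀ x : Fin d → ℝ, (∀ j, 0 ≤ x j) → L (s • x) = s * L x) ∧
  ConvexOn ℝ (Set.Ici (0 : Fin d → ℝ)) L ∧
  (∀ j : Fin d, L (fun i => if i = j then (1 : ℝ) else 0) = 1) ∧
  (∀ x : Fin d → ℝ, (∀ j, 0 ≤ x j) → (∀ j, x j ≤ L x) ∧ L x ≤ ∑ j, x j)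

/-- The only properties of a copula that are used: `C(1,…,1) = 1`, `C(u) ≤ min_j u_j`,
and the ℓ¹-Lipschitz bound on the unit cube. -/
def IsCopulaLike (d : ℕ) (C : (Fin d → ℝ) → ℝ) : Prop :=
  C (fun _ => 1) = 1 ∧
  (∀ u : Fin d → ℝ, (∀ j, 0 ≤ u j ∧ u j ≤ 1) → ∀ j, C u ≤ u j) ∧
  (∀ u v : Fin d → ℝ, (∀ j, 0 ≤ u j ∧ u j ≤ 1) → (∀ j, 0 ≤ v j ∧ v j ≤ 1) →
    |C u - C v| ≤ ∑ j, |u j - v j|)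

/-- The extreme-value copula associated with the stable tail dependence function `L`:
`C_∞(u) = exp(−L(−log u_1,…,−log u_d))` for `u ∈ (0,1]^d`, and `0` if some `u_j = 0`. -/
def CinfFun (d : ℕ) (L : (Fin d → ℝ) → ℝ) (u : Fin d → ℝ) : ℝ :=
  if ∀ j, 0 < u j then Real.exp (-(L (fun j => -Real.log (u j)))) else 0

/-- Regular variation at infinity of index `ρ`. -/
def RegVary (f : ℝ → ℝ) (ρ : ℝ) : Prop :=
  ∀ x : ℝ, 0 < x → Filter.Tendsto (fun t => f (t * x) / f t) Filter.atTop (nhds (x ^ ρ))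

/-- POT form of the copula domain of attraction:
`t(1 − C(1 − x/t)) → L(x)` uniformly on `[0,T]^d` for every `T > 0`. -/
def PotDOA (d : ℕ) (C L : (Fin d → ℝ) → ℝ) : Prop :=
  ∀ T : ℝ, 0 < T → TendstoUniformlyOn
    (fun (t : ℝ) (x : Fin d → ℝ) => t * (1 - C (fun j => 1 - x j / t))) L Filter.atTop
    (Set.Icc (0 : Fin d → ℝ) (fun _ => T))

/-- BM form of the copula domain of attraction: `C(u^{1/r})^r → C_∞(u)` pointwise. -/
def BmDOA (d : ℕ) (C Cinf : (Fin d → ℝ) → ℝ) : Prop :=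
  ∀ u : Fin d → ℝ, (∀ j, 0 ≤ u j ∧ u j ≤ 1) →
    Filter.Tendsto (fun r : ℝ => C (fun j => u j ^ (1/r)) ^ r) Filter.atTop (nhds (Cinf u))

/-- The uniform-convergence part of Condition (SO)_p with auxiliary function `αp`
and limit `Sp`. -/
def SOpot (d : ℕ) (C L Sp : (Fin d → ℝ) → ℝ) (αp : ℝ → ℝ) : Prop :=
  ∀ T : ℝ, 0 < T → TendstoUniformlyOn
    (fun (t : ℝ) (x : Fin d → ℝ) => (t * (1 - C (fun j => 1 - x j / t)) - L x) / αp t)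
    Sp Filter.atTop (Set.Icc (0 : Fin d → ℝ) (fun _ => T))

/-- The uniform-convergence part of Condition (SO)_b with auxiliary function `αb`
and limit `Sb`. -/
def SObm (d : ℕ) (C Cinf Sb : (Fin d → ℝ) → ℝ) (αb : ℝ → ℝ) : Prop :=
  ∀ δ : ℝ, 0 < δ → δ < 1 → TendstoUniformlyOn
    (fun (r : ℝ) (u : Fin d → ℝ) => (C (fun j => u j ^ (1/r)) ^ r - Cinf u) / αb r)
    Sb Filter.atTop (Set.Icc (fun _ => δ) (fun _ => 1))

variable {d : ℕ}

lemma st13_L_zero {L : (Fin d → ℝ) → ℝ} (hL : IsSTDF d L) : L 0 = 0 := by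
  have h := hL.1 2 (by norm_num) 0 (fun j => le_refl 0)
  rw [smul_zero] at h
  linarith

lemma st13_L_subadd {L : (Fin d → ℝ) → ℝ} (hL : IsSTDF d L) (a b : Fin d → ℝ)
    (ha : ∀ j, 0 ≤ a j) (hb : ∀ j, 0 ≤ b j) : L (a + b) ≤ L a + L b := by
  have hmem : ∀ c : Fin d → ℝ, (∀ j, 0 ≤ c j) → c ∈ Set.Ici (0 : Fin d → ℝ) := by
    intro c hc; rw [Set.mem_Ici]; intro j; exact hc j
  have hconv := hL.2.1.2 (hmem a ha) (hmem b hb) (by norm_num : (0:ℝ) ≤ 1/2)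
    (by norm_num : (0:ℝ) ≤ 1/2) (by norm_num : (1:ℝ)/2 + 1/2 = 1)
  have hhalf : ∀ j, 0 ≤ ((1/2 : ℝ) • a + (1/2 : ℝ) • b) j := by
    intro j; simp only [Pi.add_apply, Pi.smul_apply, smul_eq_mul]
    have := ha j; have := hb j; linarith
  have hhom := hL.1 2 (by norm_num) _ hhalf
  have heq : (2:ℝ) • ((1/2 : ℝ) • a + (1/2 : ℝ) • b) = a + b := by
    rw [smul_add, smul_smul, smul_smul]; norm_num
  rw [heq] at hhom
  simp only [smul_eq_mul] at hconv
  rw [hhom]; linarith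

lemma st13_L_nonneg (hd : 0 < d) {L : (Fin d → ℝ) → ℝ} (hL : IsSTDF d L)
    (x : Fin d → ℝ) (hx : ∀ j, 0 ≤ x j) : 0 ≤ L x :=
  le_trans (hx ⟨0, hd⟩) ((hL.2.2.2 x hx).1 ⟨0, hd⟩)

lemma st13_L_lip {C L : (Fin d → ℝ) → ℝ} (hC : IsCopulaLike d C) (hDOA : PotDOA d C L)
    (a b : Fin d → ℝ) (ha : ∀ j, 0 ≤ a j) (hb : ∀ j, 0 ≤ b j) :
    |L a - L b| ≤ ∑ j, |a j - b j| := by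
  set T : ℝ := (∑ j, a j) + (∑ j, b j) + 1 with hT
  have hT0 : 0 < T := by
    have : 0 ≤ ∑ j, a j := Finset.sum_nonneg fun j _ => ha j
    have : 0 ≤ ∑ j, b j := Finset.sum_nonneg fun j _ => hb j
    positivity
  have hmem : ∀ c : Fin d → ℝ, (∀ j, 0 ≤ c j) → (∑ j, c j) ≤ T - 1 →
      c ∈ Set.Icc (0 : Fin d → ℝ) (fun _ => T) := by
    intro c hc hcs
    constructor
    · intro j; exact hc j
    · intro j
      have h1 : c j ≤ ∑ i, c i := Finset.single_le_sum (fun i _ => hc i) (Finset.mem_univ j)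
      simp only
      linarith
  have hmema : a ∈ Set.Icc (0 : Fin d → ℝ) (fun _ => T) := by
    apply hmem a ha
    have : 0 ≤ ∑ j, b j := Finset.sum_nonneg fun j _ => hb j
    simp only [hT]; linarith
  have hmemb : b ∈ Set.Icc (0 : Fin d → ℝ) (fun _ => T) := by
    apply hmem b hb
    have : 0 ≤ ∑ j, a j := Finset.sum_nonneg fun j _ => ha j
    simp only [hT]; linarith
  have hta := (hDOA T hT0).tendsto_at hmema
  have htb := (hDOA T hT0).tendsto_at hmemb
  have habs : Filter.Tendsto (fun t : ℝ => |t * (1 - C (fun j => 1 - a j / t)) -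
      t * (1 - C (fun j => 1 - b j / t))|) Filter.atTop (nhds (|L a - L b|)) :=
    (hta.sub htb).abs
  apply le_of_tendsto habs
  filter_upwards [Filter.eventually_ge_atTop (T + 1)] with t ht
  have ht0 : 0 < t := by linarith
  have hcube : ∀ c : Fin d → ℝ, c ∈ Set.Icc (0 : Fin d → ℝ) (fun _ => T) →
      ∀ j, 0 ≤ 1 - c j / t ∧ 1 - c j / t ≤ 1 := by
    intro c hc j
    have h1 : 0 ≤ c j := hc.1 j
    have h2 : c j ≤ T := hc.2 j
    constructor
    · have : c j / t ≤ 1 := by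
        rw [div_le_one ht0]; linarith
      linarith
    · have : 0 ≤ c j / t := by positivity
      linarith
  have hlip := hC.2.2 _ _ (hcube a hmema) (hcube b hmemb)
  have heq : t * (1 - C (fun j => 1 - a j / t)) - t * (1 - C (fun j => 1 - b j / t)) =
      t * (C (fun j => 1 - b j / t) - C (fun j => 1 - a j / t)) := by ring
  rw [heq, abs_mul, abs_of_pos ht0]
  have hcomm : |C (fun j => 1 - b j / t) - C (fun j => 1 - a j / t)| ≤
      ∑ j, |(1 - b j / t) - (1 - a j / t)| := by
    have := hC.2.2 (fun j => 1 - b j / t) (fun j => 1 - a j / t) (hcube b hmemb) (hcube a hmema)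
    exact this
  calc t * |C (fun j => 1 - b j / t) - C (fun j => 1 - a j / t)|
      ≤ t * ∑ j, |(1 - b j / t) - (1 - a j / t)| := by
        apply mul_le_mul_of_nonneg_left hcomm ht0.le
    _ = ∑ j, |a j - b j| := by
        rw [Finset.mul_sum]
        apply Finset.sum_congr rfl
        intro j _
        have : (1 - b j / t) - (1 - a j / t) = (a j - b j) / t := by ring
        rw [this, abs_div, abs_of_pos ht0]
        field_simp

lemma st13_nonnull (hd : 0 < d) {L : (Fin d → ℝ) → ℝ} (hL : IsSTDF d L)
    (hLne : ∃ x : Fin d → ℝ, (∀ j, 0 ≤ x j) ∧ L x ≠ ⨆ j, x j)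
    (H : ∀ x : Fin d → ℝ, (∀ j, 0 ≤ x j) → L x ^ 2 ≤ L (fun j => x j ^ 2)) : False := by
  obtain ⟨x₀, hx₀, hne⟩ := hLne
  haveI : Nonempty (Fin d) := ⟨⟨0, hd⟩⟩
  set M : ℝ := ⨆ j, x₀ j with hM
  have hxM : ∀ j, x₀ j ≤ M := fun j => le_ciSup (Set.Finite.bddAbove (Set.finite_range _)) j
  have hML : M ≤ L x₀ := ciSup_le fun j => (hL.2.2.2 x₀ hx₀).1 j
  have hMnn : 0 ≤ M := le_trans (hx₀ ⟨0, hd⟩) (hxM ⟨0, hd⟩)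
  have hlt : M < L x₀ := lt_of_le_of_ne hML (fun h => hne h.symm)
  have hLnn : 0 ≤ L x₀ := st13_L_nonneg hd hL x₀ hx₀
  -- key induction
  have key : ∀ n : ℕ, L x₀ ^ (2^n) ≤ L (fun j => x₀ j ^ (2^n)) := by
    intro n
    induction n with
    | zero => simp
    | succ n ih =>
      have hy : ∀ j, 0 ≤ x₀ j ^ (2^n) := fun j => pow_nonneg (hx₀ j) _
      calc L x₀ ^ (2^(n+1)) = (L x₀ ^ (2^n))^2 := by rw [← pow_mul, pow_succ]
        _ ≤ (L (fun j => x₀ j ^ (2^n)))^2 := by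
            apply pow_le_pow_left₀ (pow_nonneg hLnn _) ih
        _ ≤ L (fun j => (x₀ j ^ (2^n))^2) := H _ hy
        _ = L (fun j => x₀ j ^ (2^(n+1))) := by
            congr 1; funext j; rw [← pow_mul, pow_succ]
  have bound : ∀ n : ℕ, L x₀ ^ (2^n) ≤ (d:ℝ) * M ^ (2^n) := by
    intro n
    refine le_trans (key n) (le_trans (hL.2.2.2 _ (fun j => pow_nonneg (hx₀ j) _)).2 ?_)
    calc (∑ j : Fin d, x₀ j ^ (2^n)) ≤ ∑ _j : Fin d, M ^ (2^n) :=
          Finset.sum_le_sum fun j _ => pow_le_pow_left₀ (hx₀ j) (hxM j) _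
      _ = (d:ℝ) * M ^ (2^n) := by simp [Finset.sum_const, mul_comm]
  have bound2 : ∀ n : ℕ, L x₀ ≤ (d:ℝ) ^ (((2:ℝ)^n)⁻¹) * M := by
    intro n
    have h2n : (0:ℝ) < 2^n := by positivity
    have h1 : (L x₀ ^ (2^n) : ℝ) ≤ (d:ℝ) * M ^ (2^n) := bound n
    have h2 : ((L x₀ ^ (2^n) : ℝ)) ^ (((2:ℝ)^n)⁻¹) ≤ ((d:ℝ) * M ^ (2^n)) ^ (((2:ℝ)^n)⁻¹) :=
      Real.rpow_le_rpow (by positivity) h1 (by positivity)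
    have h3 : ((L x₀ ^ (2^n) : ℝ)) ^ (((2:ℝ)^n)⁻¹) = L x₀ := by
      rw [← Real.rpow_natCast (L x₀) (2^n), ← Real.rpow_mul hLnn]
      push_cast
      rw [mul_inv_cancel₀ (by positivity), Real.rpow_one]
    have h4 : ((d:ℝ) * M ^ (2^n)) ^ (((2:ℝ)^n)⁻¹) = (d:ℝ) ^ (((2:ℝ)^n)⁻¹) * M := by
      rw [Real.mul_rpow (by positivity) (by positivity)]
      congr 1
      rw [← Real.rpow_natCast M (2^n), ← Real.rpow_mul hMnn]
      push_cast
      rw [mul_inv_cancel₀ (by positivity), Real.rpow_one]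
    rw [h3, h4] at h2
    exact h2
  -- take the limit n → ∞
  have hd0 : (d:ℝ) ≠ 0 := by positivity
  have hexp : Filter.Tendsto (fun n : ℕ => (((2:ℝ)^n)⁻¹)) Filter.atTop (nhds 0) :=
    tendsto_inv_atTop_zero.comp (tendsto_pow_atTop_atTop_of_one_lt (by norm_num))
  have hrpow : Filter.Tendsto (fun n : ℕ => (d:ℝ) ^ (((2:ℝ)^n)⁻¹) * M) Filter.atTop (nhds M) := by
    have hc : ContinuousAt (fun e : ℝ => (d:ℝ) ^ e) 0 := Real.continuousAt_const_rpow hd0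
    have := (hc.tendsto.comp hexp).mul_const M
    simpa using this
  have : L x₀ ≤ M := ge_of_tendsto hrpow (Filter.Eventually.of_forall bound2)
  linarith

lemma st13_gamma_le {L : (Fin d → ℝ) → ℝ} (hL : IsSTDF d L) {Γ₁ : (Fin d → ℝ) → ℝ}
    (x : Fin d → ℝ) (hx : ∀ j, 0 ≤ x j)
    (hΓ : Filter.Tendsto (fun r : ℝ => r * (L (fun j => x j + (x j) ^ 2 / r) - L x))
        Filter.atTop (nhds (Γ₁ x))) : Γ₁ x ≤ L (fun j => x j ^ 2) := by
  apply le_of_tendsto hΓ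
  filter_upwards [Filter.eventually_gt_atTop (0:ℝ)] with r hr
  have hsub := st13_L_subadd hL x (fun j => x j ^ 2 / r) hx (fun j => by positivity)
  have hhom := hL.1 (1/r) (by positivity) (fun j => x j ^ 2) (fun j => by positivity)
  have heq1 : x + (fun j => x j ^ 2 / r) = (fun j => x j + x j ^ 2 / r) := by
    funext j; simp
  have heq2 : ((1/r : ℝ) • fun j => x j ^ 2) = (fun j => x j ^ 2 / r) := by
    funext j; simp [Pi.smul_apply]; field_simp
  rw [heq1] at hsub
  rw [heq2] at hhom
  rw [hhom] at hsub
  have hLs : 0 ≤ L x + 1 / r * L (fun j => x j ^ 2) - L (fun j => x j + x j ^ 2 / r) := by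
    linarith
  have : r * (L (fun j => x j + x j ^ 2 / r) - L x) ≤ r * (1/r * L (fun j => x j ^ 2)) := by
    apply mul_le_mul_of_nonneg_left (by linarith) hr.le
  calc r * (L (fun j => x j + x j ^ 2 / r) - L x) ≤ r * (1/r * L (fun j => x j ^ 2)) := this
    _ = L (fun j => x j ^ 2) := by field_simp

lemma st13_G_anti {L : (Fin d → ℝ) → ℝ} (hL : IsSTDF d L)
    (x : Fin d → ℝ) (hx : ∀ j, 0 ≤ x j) {r r' : ℝ} (hr : 0 < r) (hrr : r ≤ r') :
    r' * (L (fun j => x j + x j ^ 2 / r') - L x) ≤ r * (L (fun j => x j + x j ^ 2 / r) - L x) := by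
  have hr' : 0 < r' := lt_of_lt_of_le hr hrr
  have hmem1 : x ∈ Set.Ici (0 : Fin d → ℝ) := by rw [Set.mem_Ici]; intro j; exact hx j
  have hmem2 : (fun j => x j + x j ^ 2 / r) ∈ Set.Ici (0 : Fin d → ℝ) := by
    rw [Set.mem_Ici]; intro j
    have := hx j; simp only [Pi.zero_apply]; positivity
  have hlam1 : (0:ℝ) ≤ 1 - r/r' := by
    rw [sub_nonneg, div_le_one hr']; exact hrr
  have hlam2 : (0:ℝ) ≤ r/r' := by positivity
  have hconv := hL.2.1.2 hmem1 hmem2 hlam1 hlam2 (by ring)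
  have heq : ((1 - r/r') • x + (r/r') • fun j => x j + x j ^ 2 / r) =
      (fun j => x j + x j ^ 2 / r') := by
    funext j; simp only [Pi.add_apply, Pi.smul_apply, smul_eq_mul]
    field_simp
    ring
  rw [heq, smul_eq_mul, smul_eq_mul] at hconv
  have hkey : L (fun j => x j + x j ^ 2 / r') - L x ≤
      (r/r') * (L (fun j => x j + x j ^ 2 / r) - L x) := by nlinarith [hconv]
  calc r' * (L (fun j => x j + x j ^ 2 / r') - L x)
      ≤ r' * ((r/r') * (L (fun j => x j + x j ^ 2 / r) - L x)) :=
        mul_le_mul_of_nonneg_left hkey hr'.le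
    _ = r * (L (fun j => x j + x j ^ 2 / r) - L x) := by field_simp

lemma st13_L_contOn {C L : (Fin d → ℝ) → ℝ} (hC : IsCopulaLike d C) (hDOA : PotDOA d C L) :
    ContinuousOn L (Set.Ici (0 : Fin d → ℝ)) := by
  rw [Metric.continuousOn_iff]
  intro a ha ε hε
  refine ⟨ε / (d + 1), by positivity, fun b hb hdist => ?_⟩
  rw [Set.mem_Ici] at ha hb
  have hlip := st13_L_lip hC hDOA b a (fun j => hb j) (fun j => ha j)
  rw [Real.dist_eq]
  calc |L b - L a| ≤ ∑ j, |b j - a j| := hlip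
    _ ≤ ∑ _j : Fin d, dist b a := Finset.sum_le_sum fun j _ => by
        rw [← Real.dist_eq]; exact dist_le_pi_dist b a j
    _ = (d:ℝ) * dist b a := by simp [Finset.sum_const, mul_comm]
    _ < ε := by
        have h0 : (0:ℝ) ≤ dist b a := dist_nonneg
        calc (d:ℝ) * dist b a ≤ ((d:ℝ)+1) * dist b a := by nlinarith
          _ < ((d:ℝ)+1) * (ε/((d:ℝ)+1)) := mul_lt_mul_of_pos_left hdist (by positivity)
          _ = ε := by field_simp

lemma st13_dini (hd : 0 < d) {L Γ₁ : (Fin d → ℝ) → ℝ} (hL : IsSTDF d L)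
    (hLcont : ContinuousOn L (Set.Ici (0 : Fin d → ℝ)))
    (hΓ₁ : ∀ x : Fin d → ℝ, (∀ j, 0 ≤ x j) →
      Filter.Tendsto (fun r : ℝ => r * (L (fun j => x j + (x j) ^ 2 / r) - L x))
        Filter.atTop (nhds (Γ₁ x)))
    (hΓcont : ContinuousOn Γ₁ (Set.Ici (0 : Fin d → ℝ))) (T : ℝ) :
    TendstoUniformlyOn (fun (r : ℝ) (x : Fin d → ℝ) => r * (L (fun j => x j + x j ^ 2 / r) - L x))
      Γ₁ Filter.atTop (Set.Icc (0 : Fin d → ℝ) (fun _ => T)) := by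
  set K : Set (Fin d → ℝ) := Set.Icc (0 : Fin d → ℝ) (fun _ => T) with hK
  have hKsub : K ⊆ Set.Ici (0 : Fin d → ℝ) := fun y hy => hy.1
  have hxnn : ∀ x ∈ K, ∀ j, 0 ≤ x j := fun x hx j => hx.1 j
  -- continuity of G r on K for r > 0
  have hGcont : ∀ r : ℝ, 0 < r → ContinuousOn
      (fun x : Fin d → ℝ => r * (L (fun j => x j + x j ^ 2 / r) - L x)) K := by
    intro r hr
    have hinner : Continuous (fun x : Fin d → ℝ => (fun j => x j + x j ^ 2 / r)) :=
      continuous_pi fun j => (by fun_prop)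
    have hmaps : Set.MapsTo (fun x : Fin d → ℝ => (fun j => x j + x j ^ 2 / r)) K
        (Set.Ici (0 : Fin d → ℝ)) := by
      intro x hx
      rw [Set.mem_Ici]
      intro j
      have := hxnn x hx j
      simp only [Pi.zero_apply]
      positivity
    exact continuousOn_const.mul ((hLcont.comp hinner.continuousOn hmaps).sub (hLcont.mono hKsub))
  -- Γ₁ x ≤ G r x for r > 0
  have hGge : ∀ r : ℝ, 0 < r → ∀ x ∈ K, Γ₁ x ≤ r * (L (fun j => x j + x j ^ 2 / r) - L x) := by
    intro r hr x hx
    apply le_of_tendsto (hΓ₁ x (hxnn x hx))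
    filter_upwards [Filter.eventually_ge_atTop r] with r' hr'
    exact st13_G_anti hL x (hxnn x hx) hr hr'
  rw [Metric.tendstoUniformlyOn_iff]
  intro ε hε
  -- cover construction
  have hcover : ∀ x ∈ K, ∃ rx : ℝ, ∃ V : Set (Fin d → ℝ), 1 ≤ rx ∧ IsOpen V ∧ x ∈ V ∧
      ∀ y ∈ V ∩ K, rx * (L (fun j => y j + y j ^ 2 / rx) - L y) - Γ₁ y < ε/2 := by
    intro x hx
    have h1 : ∀ᶠ r : ℝ in Filter.atTop,
        |r * (L (fun j => x j + x j ^ 2 / r) - L x) - Γ₁ x| < ε/4 := by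
      have := (hΓ₁ x (hxnn x hx)).eventually (eventually_abs_sub_lt (Γ₁ x) (by positivity : (0:ℝ) < ε/4))
      simpa [abs_sub_comm] using this
    obtain ⟨rx, hrx1, hrx2⟩ := ((h1.and (Filter.eventually_ge_atTop (1:ℝ))).exists)
    have hrx0 : (0:ℝ) < rx := by linarith
    have hφ : ContinuousOn (fun y => rx * (L (fun j => y j + y j ^ 2 / rx) - L y) - Γ₁ y) K :=
      (hGcont rx hrx0).sub (hΓcont.mono hKsub)
    have hφx : (fun y => rx * (L (fun j => y j + y j ^ 2 / rx) - L y) - Γ₁ y) x < ε/2 := by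
      have := abs_lt.mp hrx1
      simp only
      linarith [this.2]
    have hev : ∀ᶠ y in nhdsWithin x K,
        (fun y => rx * (L (fun j => y j + y j ^ 2 / rx) - L y) - Γ₁ y) y < ε/2 :=
      (hφ x hx).eventually (eventually_lt_nhds hφx)
    rw [eventually_nhdsWithin_iff] at hev
    obtain ⟨V, hVsub, hVopen, hVx⟩ := eventually_nhds_iff.mp hev
    exact ⟨rx, V, hrx2, hVopen, hVx, fun y hy => hVsub y hy.1 hy.2⟩
  choose! rx V hrx1 hVopen hVmem hVprop using hcover
  obtain ⟨F, hFK, hFcov⟩ := (isCompact_Icc : IsCompact K).elim_nhds_subcover V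
    (fun x hx => (hVopen x hx).mem_nhds (hVmem x hx))
  obtain ⟨R, hR⟩ := (F.image rx).bddAbove
  filter_upwards [Filter.eventually_ge_atTop (max R 1)] with ρ hρ
  intro x hx
  have hρ1 : (1:ℝ) ≤ ρ := le_trans (le_max_right R 1) hρ
  have hρ0 : (0:ℝ) < ρ := by linarith
  obtain ⟨x₀, hx₀F, hxV⟩ := Set.mem_iUnion₂.mp (hFcov hx)
  have hx₀K : x₀ ∈ K := hFK x₀ hx₀F
  have hrx₀ : rx x₀ ≤ ρ := by
    have h1 : rx x₀ ∈ (F.image rx) := Finset.mem_image_of_mem rx hx₀F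
    exact le_trans (hR (Finset.mem_coe.mpr h1)) (le_trans (le_max_left R 1) hρ)
  have h1 : ρ * (L (fun j => x j + x j ^ 2 / ρ) - L x) ≤
      rx x₀ * (L (fun j => x j + x j ^ 2 / rx x₀) - L x) :=
    st13_G_anti hL x (hxnn x hx) (by linarith [hrx1 x₀ hx₀K]) hrx₀
  have h2 : rx x₀ * (L (fun j => x j + x j ^ 2 / rx x₀) - L x) - Γ₁ x < ε/2 :=
    hVprop x₀ hx₀K x ⟨hxV, hx⟩
  have h3 : Γ₁ x ≤ ρ * (L (fun j => x j + x j ^ 2 / ρ) - L x) := hGge ρ hρ0 x hx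
  rw [Real.dist_eq, abs_sub_lt_iff]
  constructor <;> linarith


lemma st13_log_dist (a b c : ℝ) (hc : 0 < c) (ha : c ≤ a) (hb : c ≤ b) :
    |Real.log a - Real.log b| ≤ |a - b| / c := by
  have key : ∀ p q : ℝ, c ≤ p → c ≤ q → q ≤ p → Real.log p - Real.log q ≤ (p - q) / c := by
    intro p q hp hq hqp
    have hq0 : 0 < q := lt_of_lt_of_le hc hq
    have hp0 : 0 < p := lt_of_lt_of_le hc hp
    have h1 : Real.log p - Real.log q = Real.log (p / q) := (Real.log_div hp0.ne' hq0.ne').symm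
    have h2 : Real.log (p / q) ≤ p / q - 1 := Real.log_le_sub_one_of_pos (by positivity)
    have h3 : p / q - 1 = (p - q) / q := by field_simp
    have h4 : (p - q) / q ≤ (p - q) / c := by
      apply div_le_div_of_nonneg_left (by linarith) hc hq
    calc Real.log p - Real.log q = Real.log (p/q) := h1
      _ ≤ p/q - 1 := h2
      _ = (p-q)/q := h3
      _ ≤ (p-q)/c := h4
  rcases le_total b a with h | h
  · rw [abs_of_nonneg (by linarith : (0:ℝ) ≤ a - b),
      abs_of_nonneg (sub_nonneg.mpr (Real.log_le_log (lt_of_lt_of_le hc hb) h))]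
    exact key a b ha hb h
  · rw [abs_of_nonpos (by linarith : a - b ≤ 0),
      abs_of_nonpos (sub_nonpos.mpr (Real.log_le_log (lt_of_lt_of_le hc ha) h))]
    have := key b a hb ha h
    rw [neg_sub, neg_sub]
    linarith [this]

lemma st13_log_bound (s : ℝ) (h0 : 0 ≤ s) (h1 : s ≤ 1/2) :
    |(-Real.log (1 - s)) - (s + s^2/2)| ≤ s^3 := by
  -- define f₂ := -log(1-s) - s - s²/2 ≥ 0 and f₁ := f₂ - s³ ≤ 0 on [0,1/2]
  have hderiv : ∀ y ∈ Set.Icc (0:ℝ) (1/2), HasDerivAt (fun z => -Real.log (1 - z)) (1/(1-y)) y := by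
    intro y hy
    have hy1 : (1:ℝ) - y ≠ 0 := by simp at hy; intro h; nlinarith [hy.1, hy.2]
    have h := ((Real.hasDerivAt_log hy1).comp y (((hasDerivAt_id y).const_sub 1)) : HasDerivAt (fun z => Real.log (1 - z)) _ y)
    exact h.neg.congr_deriv (by ring)
  have mono : ∀ F : ℝ → ℝ, ∀ F' : ℝ → ℝ, (∀ y ∈ Set.Icc (0:ℝ) (1/2), HasDerivAt F (F' y) y) →
      (∀ y ∈ Set.Ioo (0:ℝ) (1/2), 0 ≤ F' y) → F 0 ≤ F s := by
    intro F F' hF hF'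
    have := monotoneOn_of_deriv_nonneg (convex_Icc (0:ℝ) (1/2))
      (fun y hy => (hF y hy).continuousAt.continuousWithinAt)
      (fun y hy => (hF y (interior_subset hy)).differentiableAt.differentiableWithinAt)
      (fun y hy => by
        rw [interior_Icc] at hy
        rw [(hF y (Set.mem_Icc_of_Ioo hy)).deriv]
        exact hF' y hy)
    exact this (Set.mem_Icc.mpr ⟨le_refl 0, by norm_num⟩) (Set.mem_Icc.mpr ⟨h0, h1⟩) h0
  rw [abs_le]
  constructor
  · -- lower: -s³ ≤ -log(1-s) - (s+s²/2), i.e. G s ≥ 0 where G y = -log(1-y)-y-y²/2... we show stronger G ≥ 0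
    have h := mono (fun y => -Real.log (1-y) - y - y^2/2) (fun y => 1/(1-y) - 1 - y)
      (fun y hy => by
        have := ((hderiv y hy).sub ((hasDerivAt_id y).add_const 0)).sub
          (((hasDerivAt_id y).pow 2).div_const 2)
        simp at this ⊢
        convert this using 1 <;> (try rfl) <;> (try (funext z; simp only [Pi.sub_apply, Pi.add_apply, Pi.pow_apply, id_eq, id])) <;> ring)
      (fun y hy => by
        obtain ⟨hy0, hy2⟩ := hy
        have h1y : (0:ℝ) < 1 - y := by linarith
        simp only [sub_nonneg]
        rw [← sub_nonneg]
        have : 1 / (1-y) - 1 - y = y^2 / (1-y) := by field_simp; ring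
        rw [this]
        positivity
        )
    simp at h
    nlinarith [h, pow_nonneg h0 3]
  · -- upper: F s ≥ 0 where F y = y + y²/2 + y³ + log(1-y)
    have h := mono (fun y => y + y^2/2 + y^3 + Real.log (1-y)) (fun y => 1 + y + 3*y^2 - 1/(1-y))
      (fun y hy => by
        have hlog := hderiv y hy
        have := (((hasDerivAt_id y).add (((hasDerivAt_id y).pow 2).div_const 2)).add
          ((hasDerivAt_id y).pow 3)).sub hlog
        simp at this ⊢
        convert this using 1 <;> (try rfl) <;> (try (funext z; simp only [Pi.sub_apply, Pi.add_apply, Pi.pow_apply, id_eq, id])) <;> ring)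
      (fun y hy => by
        obtain ⟨hy0, hy2⟩ := hy
        have h1y : (0:ℝ) < 1 - y := by linarith
        rw [sub_nonneg, div_le_iff₀ h1y]
        nlinarith)
    simp at h
    nlinarith [h]


lemma st13_C_contOn {C : (Fin d → ℝ) → ℝ} (hC : IsCopulaLike d C) :
    ContinuousOn C (Set.Icc (0 : Fin d → ℝ) (fun _ => 1)) := by
  rw [Metric.continuousOn_iff]
  intro a ha ε hε
  refine ⟨ε / (d + 1), by positivity, fun b hb hdist => ?_⟩
  have hmem : ∀ c : Fin d → ℝ, c ∈ Set.Icc (0 : Fin d → ℝ) (fun _ => 1) →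
      ∀ j, 0 ≤ c j ∧ c j ≤ 1 := fun c hc j => ⟨hc.1 j, hc.2 j⟩
  have hlip := hC.2.2 b a (hmem b hb) (hmem a ha)
  rw [Real.dist_eq]
  calc |C b - C a| ≤ ∑ j, |b j - a j| := hlip
    _ ≤ ∑ _j : Fin d, dist b a := Finset.sum_le_sum fun j _ => by
        rw [← Real.dist_eq]; exact dist_le_pi_dist b a j
    _ = (d:ℝ) * dist b a := by simp [Finset.sum_const, mul_comm]
    _ < ε := by
        have h0 : (0:ℝ) ≤ dist b a := dist_nonneg
        calc (d:ℝ) * dist b a ≤ ((d:ℝ)+1) * dist b a := by nlinarith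
          _ < ((d:ℝ)+1) * (ε/((d:ℝ)+1)) := mul_lt_mul_of_pos_left hdist (by positivity)
          _ = ε := by field_simp

set_option maxHeartbeats 1000000 in
lemma st13_core (hd : 0 < d) {C L Sb : (Fin d → ℝ) → ℝ} {αb : ℝ → ℝ}
    (hL : IsSTDF d L) (hC : IsCopulaLike d C) (hDOA : PotDOA d C L)
    (hαpos : ∀ r : ℝ, 0 < r → 0 < αb r)
    (hα0 : Filter.Tendsto αb Filter.atTop (nhds 0))
    (hScont : ContinuousOn Sb (Set.Icc (0 : Fin d → ℝ) (fun _ => 1)))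
    (hSO : SObm d C (CinfFun d L) Sb αb)
    (hc0 : Filter.Tendsto (fun r : ℝ => 2 * r * αb r) Filter.atTop (nhds 0))
    (T : ℝ) (hT : 0 < T) :
    TendstoUniformlyOn
      (fun (t : ℝ) (x : Fin d → ℝ) =>
        2 * t * (t * (1 - C (fun j => 1 - x j / t)) - L (fun j => x j + x j ^ 2 / (2 * t))))
      (fun x => -(L x) ^ 2) Filter.atTop (Set.Icc (0 : Fin d → ℝ) (fun _ => T)) := by
  -- bound for Sb
  obtain ⟨M, hM⟩ := (isCompact_Icc : IsCompact (Set.Icc (0 : Fin d → ℝ) (fun _ => 1))).exists_bound_of_continuousOn hScont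
  have hM0 : 0 ≤ M := le_trans (norm_nonneg _) (hM 0 ⟨le_refl _, fun j => by norm_num⟩)
  -- constants
  set B : ℝ := (d:ℝ) * (T + T^2 + T^3) with hB
  have hB0 : 0 ≤ B := by have : (0:ℝ) ≤ (d:ℝ) := Nat.cast_nonneg d; positivity
  set κ : ℝ := Real.exp (-B) with hκ
  have hκ0 : 0 < κ := Real.exp_pos _
  have hκ1 : κ ≤ 1 := Real.exp_le_one_iff.mpr (by linarith)
  set δ : ℝ := Real.exp (-(T + T^2 + T^3 + 1)) with hδ
  have hδ0 : 0 < δ := Real.exp_pos _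
  have hδ1 : δ < 1 := by
    rw [hδ]
    apply Real.exp_lt_one_iff.mpr
    nlinarith
  have htα : Filter.Tendsto (fun t : ℝ => t * αb t) Filter.atTop (nhds 0) := by
    have h := hc0.div_const 2
    have heq : (fun r : ℝ => 2 * r * αb r / 2) = fun r => r * αb r := by funext r; ring
    rwa [heq, zero_div] at h
  rw [Metric.tendstoUniformlyOn_iff]
  intro ε hε
  set ε₁ : ℝ := ε / (4 * (2*(d:ℝ)*T + 1)) with hε₁def
  have hdT0 : 0 ≤ (d:ℝ)*T := by positivity
  have hε₁0 : 0 < ε₁ := by positivity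
  set c4 : ℝ := ε * (κ/2) / (8 * (M+1)) with hc4def
  have hc40 : 0 < c4 := by positivity
  set Q : ℝ := 2*((d:ℝ)*T)^3 + 2*(d:ℝ)*T^3 with hQdef
  have hQ0 : 0 ≤ Q := by positivity
  have hQt : Filter.Tendsto (fun t : ℝ => Q / t) Filter.atTop (nhds 0) :=
    Filter.Tendsto.div_atTop tendsto_const_nhds Filter.tendsto_id
  filter_upwards [Filter.eventually_ge_atTop (1 + 2*T + 2*(d:ℝ)*T),
    Metric.tendstoUniformlyOn_iff.mp (hDOA T hT) ε₁ hε₁0,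
    Metric.tendstoUniformlyOn_iff.mp (hSO δ hδ0 hδ1) 1 one_pos,
    htα.eventually (eventually_abs_sub_lt 0 hc40),
    hα0.eventually (eventually_abs_sub_lt 0 (by positivity : (0:ℝ) < κ/(2*(M+1)))),
    hQt.eventually (eventually_abs_sub_lt 0 (by positivity : (0:ℝ) < ε/4))]
    with t ht1 ht2 ht3 ht4 ht5 ht6
  intro x hx
  show dist (-(L x)^2)
    (2*t*(t*(1 - C (fun j => 1 - x j/t)) - L (fun j => x j + x j^2/(2*t)))) < ε
  have hxnn : ∀ j, 0 ≤ x j := fun j => hx.1 j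
  have hxT : ∀ j, x j ≤ T := fun j => hx.2 j
  have ht0 : (0:ℝ) < t := by nlinarith
  have htge1 : (1:ℝ) ≤ t := by nlinarith
  have ht2T : 2*T ≤ t := by nlinarith
  have htdT : 2*(d:ℝ)*T ≤ t := by nlinarith
  -- coordinatewise bounds
  have hshalf : ∀ j, 0 ≤ x j / t ∧ x j / t ≤ 1/2 := by
    intro j
    constructor
    · exact div_nonneg (hxnn j) ht0.le
    · rw [div_le_iff₀ ht0]; nlinarith [hxT j, hxnn j]
  -- define y, z, u
  set y : Fin d → ℝ := fun j => -(t * Real.log (1 - x j / t)) with hydef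
  set z : Fin d → ℝ := fun j => x j + x j ^ 2 / (2*t) with hzdef
  clear_value y z
  clear ht1 htα hQt
  have hyz : ∀ j, |y j - z j| ≤ T^3 / t^2 := by
    intro j
    obtain ⟨hs0, hs1⟩ := hshalf j
    have hlb := st13_log_bound (x j / t) hs0 hs1
    have h1 : y j - z j = t * ((-Real.log (1 - x j / t)) - (x j / t + (x j / t)^2/2)) := by
      simp only [hydef, hzdef]
      field_simp
    rw [h1, abs_mul, abs_of_pos ht0]
    calc t * |(-Real.log (1 - x j / t)) - (x j / t + (x j / t)^2/2)|
        ≤ t * (x j / t)^3 := mul_le_mul_of_nonneg_left hlb ht0.le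
      _ ≤ T^3 / t^2 := by
          rw [div_pow, ← mul_div_assoc]
          rw [div_le_div_iff₀ (by positivity) (by positivity)]
          have : x j ^ 3 ≤ T ^ 3 := pow_le_pow_left₀ (hxnn j) (hxT j) 3
          calc t * x j ^ 3 * t ^ 2 = x j ^3 * t^3 := by ring
            _ ≤ T^3 * t^3 := by nlinarith [pow_pos ht0 3]
  have hynn : ∀ j, 0 ≤ y j := by
    intro j
    obtain ⟨hs0, hs1⟩ := hshalf j
    have hlog : Real.log (1 - x j / t) ≤ 0 := Real.log_nonpos (by linarith) (by linarith)
    simp only [hydef]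
    nlinarith
  have hznn : ∀ j, 0 ≤ z j := by
    intro j
    have := hxnn j
    simp only [hzdef]
    positivity
  have hzB : ∀ j, z j ≤ T + T^2 := by
    intro j
    have h1 : x j ^2/(2*t) ≤ T^2 := by
      rw [div_le_iff₀ (by linarith : (0:ℝ) < 2*t)]
      nlinarith [hxnn j, hxT j]
    have := hxT j
    simp only [hzdef]
    linarith
  have hyB : ∀ j, y j ≤ T + T^2 + T^3 := by
    intro j
    have h1 := hyz j
    have h2 : T^3/t^2 ≤ T^3 := by
      rw [div_le_iff₀ (by positivity)]
      have ht2 : 1 ≤ t^2 := by nlinarith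
      nlinarith [pow_pos hT 3]
    have h3 := (abs_le.mp h1).2
    have h4 := hzB j
    nlinarith [h2, h3, h4]
  -- u and its properties
  set u : Fin d → ℝ := fun j => Real.exp (-(y j)) with hudef
  have hupos : ∀ j, 0 < u j := fun j => Real.exp_pos _
  have hule1 : ∀ j, u j ≤ 1 := fun j => Real.exp_le_one_iff.mpr (by linarith [hynn j])
  have huge : ∀ j, δ ≤ u j := by
    intro j
    rw [hδ, hudef]
    exact Real.exp_le_exp.mpr (by linarith [hyB j])
  have humem : u ∈ Set.Icc (fun _ : Fin d => δ) (fun _ => 1) :=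
    ⟨fun j => huge j, fun j => hule1 j⟩
  have humem01 : u ∈ Set.Icc (0 : Fin d → ℝ) (fun _ => 1) :=
    ⟨fun j => (hupos j).le, fun j => hule1 j⟩
  have hCarg : (fun j => u j ^ (1/t)) = (fun j => 1 - x j / t) := by
    funext j
    have h1 : (0:ℝ) < 1 - x j / t := by linarith [(hshalf j).2]
    rw [hudef]
    simp only
    rw [Real.rpow_def_of_pos (Real.exp_pos _), Real.log_exp]
    have h2 : -(y j) * (1/t) = Real.log (1 - x j / t) := by
      rw [hydef]
      field_simp
    rw [h2, Real.exp_log h1]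
  have hyu : (fun j => -Real.log (u j)) = y := by
    funext j; simp only [hudef, Real.log_exp]; ring
  have hKdef : CinfFun d L u = Real.exp (-(L y)) := by
    unfold CinfFun
    rw [if_pos hupos, hyu]
  clear_value u
  have hLyB : L y ≤ B := by
    have h1 := (hL.2.2.2 y hynn).2
    calc L y ≤ ∑ j, y j := h1
      _ ≤ ∑ _j : Fin d, (T + T^2 + T^3) := Finset.sum_le_sum fun j _ => hyB j
      _ = B := by rw [hB]; simp [Finset.sum_const]; try ring
  have hLynn : 0 ≤ L y := st13_L_nonneg hd hL y hynn
  have hKge : κ ≤ Real.exp (-(L y)) := by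
    rw [hκ]; exact Real.exp_le_exp.mpr (by linarith)
  -- apply (SO)_b at u
  have hαt : 0 < αb t := hαpos t ht0
  have hSOx := ht3 u humem
  rw [hCarg, hKdef, Real.dist_eq] at hSOx
  set P : ℝ := C (fun j => 1 - x j / t) ^ t with hPdef
  set K : ℝ := Real.exp (-(L y)) with hKv
  clear_value P K
  have hPK : |P - K| ≤ αb t * (M + 1) := by
    have h2 : |Sb u| ≤ M := by
      have := hM u humem01
      rwa [Real.norm_eq_abs] at this
    obtain ⟨h2a, h2b⟩ := abs_le.mp h2
    obtain ⟨h1a, h1b⟩ := abs_lt.mp hSOx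
    have h3 : |(P - K)/αb t| ≤ M + 1 := abs_le.mpr ⟨by linarith, by linarith⟩
    rw [abs_div, abs_of_pos hαt] at h3
    rw [div_le_iff₀ hαt] at h3
    linarith
  -- facts about C at v
  have hvmem : ∀ j, 0 ≤ 1 - x j / t ∧ 1 - x j / t ≤ 1 := by
    intro j
    obtain ⟨a, b⟩ := hshalf j
    constructor <;> linarith
  have hCvle : C (fun j => 1 - x j / t) ≤ 1 := by
    have := hC.2.1 (fun j => 1 - x j/t) hvmem ⟨0, hd⟩
    exact le_trans this (hvmem ⟨0,hd⟩).2
  set s : ℝ := 1 - C (fun j => 1 - x j / t) with hsdef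
  clear_value s
  have hCv : C (fun j => 1 - x j / t) = 1 - s := by rw [hsdef]; ring
  have hs0 : 0 ≤ s := by rw [hsdef]; linarith
  have hsle : s ≤ (d:ℝ)*T/t := by
    have honemem : ∀ j : Fin d, 0 ≤ (fun _ : Fin d => (1:ℝ)) j ∧ (fun _ : Fin d => (1:ℝ)) j ≤ 1 := by
      intro j; norm_num
    have hlip := hC.2.2 (fun _ => 1) (fun j => 1 - x j/t) honemem hvmem
    rw [hC.1] at hlip
    have h1 : ∑ j, |1 - (1 - x j / t)| ≤ (d:ℝ)*T/t := by
      calc ∑ j, |1 - (1 - x j / t)| = ∑ j, x j / t := by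
            apply Finset.sum_congr rfl
            intro j _
            rw [show 1 - (1 - x j / t) = x j / t by ring, abs_of_nonneg (hshalf j).1]
        _ ≤ ∑ _j : Fin d, T/t := Finset.sum_le_sum fun j _ => by
            exact div_le_div_of_nonneg_right (hxT j) ht0.le
        _ = (d:ℝ)*T/t := by simp [Finset.sum_const]; try ring
    have h0abs : s ≤ |1 - C (fun j => 1 - x j / t)| := by
      rw [hsdef]; exact le_abs_self _
    calc s ≤ |1 - C (fun j => 1 - x j / t)| := h0abs
      _ ≤ ∑ j, |1 - (1 - x j / t)| := hlip
      _ ≤ (d:ℝ)*T/t := h1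
  have hshalf2 : s ≤ 1/2 := by
    apply le_trans hsle
    rw [div_le_iff₀ ht0]
    nlinarith
  have hCvpos : 0 < C (fun j => 1 - x j / t) := by rw [hCv]; linarith
  set Rv : ℝ := (-Real.log (1-s)) - (s + s^2/2) with hRvdef
  clear_value Rv
  have hRv : |Rv| ≤ s^3 := by rw [hRvdef]; exact st13_log_bound s hs0 hshalf2
  have hlogCv : Real.log (C (fun j => 1 - x j / t)) = -(s + s^2/2 + Rv) := by
    rw [hCv, hRvdef]; ring
  have hlogP : Real.log P = t * Real.log (C (fun j => 1 - x j / t)) := by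
    rw [hPdef]; exact Real.log_rpow hCvpos _
  have hPpos : 0 < P := by rw [hPdef]; exact Real.rpow_pos_of_pos hCvpos _
  have hαsmall : αb t * (M+1) ≤ κ/2 := by
    have h1 : |αb t| < κ/(2*(M+1)) := by simpa using ht5
    have h2 : αb t < κ/(2*(M+1)) := lt_of_le_of_lt (le_abs_self _) h1
    have hMp : (0:ℝ) < M + 1 := by linarith
    have h3 : αb t * (M+1) < (κ/(2*(M+1))) * (M+1) := mul_lt_mul_of_pos_right h2 hMp
    have h4 : (κ/(2*(M+1))) * (M+1) = κ/2 := by field_simp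
    rw [h4] at h3
    exact h3.le
  have hPge : κ/2 ≤ P := by
    obtain ⟨h5a, h5b⟩ := abs_le.mp hPK
    linarith
  have hlogdist := st13_log_dist P K (κ/2) (by positivity) hPge (by linarith)
  have hlogK : Real.log K = -(L y) := by rw [hKv, Real.log_exp]
  rw [hlogP, hlogK] at hlogdist
  -- main estimate for |t*s + t*s²/2 - L y|
  have hmain1 : |t*s + t*(s^2/2) - L y| ≤ |P - K|/(κ/2) + t*s^3 := by
    have h1 : t*s + t*(s^2/2) - L y = -((t * Real.log (C (fun j => 1 - x j / t))) - (-(L y))) - t*Rv := by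
      rw [hlogCv]; ring
    rw [h1]
    calc |(-((t * Real.log (C (fun j => 1 - x j / t))) - (-(L y)))) - t*Rv|
        ≤ |(-((t * Real.log (C (fun j => 1 - x j / t))) - (-(L y))))| + |t*Rv| := abs_sub _ _
      _ ≤ |P - K|/(κ/2) + t*s^3 := by
          rw [abs_neg]
          have h2 : |t*Rv| ≤ t*s^3 := by
            rw [abs_mul, abs_of_pos ht0]
            exact mul_le_mul_of_nonneg_left hRv ht0.le
          exact add_le_add hlogdist h2
  -- final assembly
  have hts_le : t*s ≤ (d:ℝ)*T := by
    have := mul_le_mul_of_nonneg_left hsle ht0.le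
    calc t*s ≤ t*((d:ℝ)*T/t) := this
      _ = (d:ℝ)*T := by field_simp
  have hts_nn : 0 ≤ t*s := by positivity
  have hLx_le : L x ≤ (d:ℝ)*T := by
    calc L x ≤ ∑ j, x j := (hL.2.2.2 x hxnn).2
      _ ≤ ∑ _j : Fin d, T := Finset.sum_le_sum fun j _ => hxT j
      _ = (d:ℝ)*T := by simp [Finset.sum_const]; try ring
  have hLx_nn : 0 ≤ L x := st13_L_nonneg hd hL x hxnn
  have hdoax := ht2 x hx
  rw [Real.dist_eq] at hdoax
  have hdoax2 : |L x - t*s| < ε₁ := by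
    have : t * (1 - C (fun j => 1 - x j / t)) = t * s := by rw [hsdef]
    rwa [this] at hdoax
  have hC3 : |(L x)^2 - (t*s)^2| ≤ ε/4 := by
    have h1 : (L x)^2 - (t*s)^2 = (L x - t*s) * (L x + t*s) := by ring
    rw [h1, abs_mul]
    have h2 : |L x + t*s| ≤ 2*(d:ℝ)*T + 1 := by
      rw [abs_of_nonneg (by linarith)]
      linarith
    calc |L x - t*s| * |L x + t*s| ≤ ε₁ * (2*(d:ℝ)*T + 1) := by
          apply mul_le_mul hdoax2.le h2 (abs_nonneg _) hε₁0.le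
      _ = ε/4 := by rw [hε₁def]; field_simp
  have hlipyz : |L y - L z| ≤ (d:ℝ)*(T^3/t^2) := by
    calc |L y - L z| ≤ ∑ j, |y j - z j| := st13_L_lip hC hDOA y z hynn hznn
      _ ≤ ∑ _j : Fin d, T^3/t^2 := Finset.sum_le_sum fun j _ => hyz j
      _ = (d:ℝ)*(T^3/t^2) := by simp [Finset.sum_const]; try ring
  have hA1 : 2*t*(αb t * (M+1))/(κ/2) < ε/4 := by
    have h1 : t * αb t < c4 := by
      have := (abs_lt.mp ht4).2
      simpa using this
    rw [hc4def] at h1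
    rw [div_lt_iff₀ (by positivity)]
    have hMp : (0:ℝ) < M + 1 := by linarith
    calc 2*t*(αb t * (M+1)) = (t * αb t) * (2*(M+1)) := by ring
      _ < (ε * (κ/2) / (8*(M+1))) * (2*(M+1)) := by
          apply mul_lt_mul_of_pos_right h1 (by positivity)
      _ = ε/4 * (κ/2) := by field_simp; ring
  have hs3 : 2*t^2*s^3 ≤ 2*((d:ℝ)*T)^3/t := by
    have h1 : s^3 ≤ ((d:ℝ)*T/t)^3 := pow_le_pow_left₀ hs0 hsle 3
    calc 2*t^2*s^3 ≤ 2*t^2*(((d:ℝ)*T)^3/t^3) := by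
          rw [div_pow] at h1
          exact mul_le_mul_of_nonneg_left h1 (by positivity)
      _ = 2*((d:ℝ)*T)^3/t := by field_simp
  have hQt2 : Q/t < ε/4 := by
    have := (abs_lt.mp ht6).2
    simpa using this
  -- the identity
  rw [Real.dist_eq]
  have hid : -(L x)^2 - (2*t*(t*s - L z)) =
      -((2*t*(t*s + t*(s^2/2) - L y)) + (2*t*(L y - L z)) + ((L x)^2 - (t*s)^2)) := by ring
  rw [hid, abs_neg]
  have hb1 : |2*t*(t*s + t*(s^2/2) - L y)| < ε/4 + 2*((d:ℝ)*T)^3/t := by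
    rw [abs_mul, abs_of_pos (by linarith : (0:ℝ) < 2*t)]
    calc 2*t*|t*s + t*(s^2/2) - L y| ≤ 2*t*(|P - K|/(κ/2) + t*s^3) := by
          apply mul_le_mul_of_nonneg_left hmain1 (by linarith)
      _ = 2*t*(|P-K|/(κ/2)) + 2*t^2*s^3 := by ring
      _ ≤ 2*t*((αb t * (M+1))/(κ/2)) + 2*t^2*s^3 := by
          have h8 : |P - K|/(κ/2) ≤ (αb t * (M+1))/(κ/2) :=
            (div_le_div_iff_of_pos_right (by positivity)).mpr hPK
          have h9 := mul_le_mul_of_nonneg_left h8 (by linarith : (0:ℝ) ≤ 2*t)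
          linarith
      _ < ε/4 + 2*((d:ℝ)*T)^3/t := by
          have h9 : 2*t*((αb t * (M+1))/(κ/2)) = 2*t*(αb t * (M+1))/(κ/2) := by ring
          rw [h9]
          exact add_lt_add_of_lt_of_le hA1 hs3
  have hb2 : |2*t*(L y - L z)| ≤ 2*(d:ℝ)*T^3/t := by
    rw [abs_mul, abs_of_pos (by linarith : (0:ℝ) < 2*t)]
    calc 2*t*|L y - L z| ≤ 2*t*((d:ℝ)*(T^3/t^2)) := by
          apply mul_le_mul_of_nonneg_left hlipyz (by linarith)
      _ = 2*(d:ℝ)*T^3/t := by field_simp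
  calc |(2*t*(t*s + t*(s^2/2) - L y)) + (2*t*(L y - L z)) + ((L x)^2 - (t*s)^2)|
      ≤ |2*t*(t*s + t*(s^2/2) - L y)| + |2*t*(L y - L z)| + |(L x)^2 - (t*s)^2| := by
        apply le_trans (abs_add_le _ _)
        apply add_le_add (abs_add_le _ _) le_rfl
    _ < (ε/4 + 2*((d:ℝ)*T)^3/t) + 2*(d:ℝ)*T^3/t + ε/4 := by
        apply add_lt_add_of_lt_of_le (add_lt_add_of_lt_of_le hb1 hb2) hC3
    _ ≤ ε/4 + Q/t + ε/4 := by
        rw [hQdef]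
        have : 2*((d:ℝ)*T)^3/t + 2*(d:ℝ)*T^3/t = (2*((d:ℝ)*T)^3 + 2*(d:ℝ)*T^3)/t := by ring
        linarith [this.le]
    _ < ε/4 + ε/4 + ε/4 := by linarith [hQt2]
    _ < ε := by linarith


/-- Theorem 2.6 (b)(ii). If (SO)_b holds with `2r·α_b(r) → 0` and
`L ≠ L_∨`, then (i) `2t(t(1 − C(1 − x/t)) − L(x)) → Γ₁(x) − L(x)²` pointwise with
non-null limit, and (ii) the convergence (equivalently, (SO)_p with `α_p(t) = 1/(2t)`)
is uniform on `[0,T]^d` iff `Γ₁` is continuous. -/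
theorem statement13 {d : ℕ} (hd : 0 < d) (C L Sb : (Fin d → ℝ) → ℝ) (αb : ℝ → ℝ) (ρb : ℝ)
    (hL : IsSTDF d L) (hC : IsCopulaLike d C)
    (hLne : ∃ x : Fin d → ℝ, (∀ j, 0 ≤ x j) ∧ L x ≠ ⨆ j, x j)
    (hDOA : PotDOA d C L)
    (hαpos : ∀ r : ℝ, 0 < r → 0 < αb r)
    (hα0 : Filter.Tendsto αb Filter.atTop (nhds 0))
    (hScont : ContinuousOn Sb (Set.Icc (0 : Fin d → ℝ) (fun _ => 1)))
    (hSnonnull : ∃ u : Fin d → ℝ, (∀ j, 0 ≤ u j ∧ u j ≤ 1) ∧ Sb u ≠ 0)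
    (hSO : SObm d C (CinfFun d L) Sb αb)
    (hρ : ρb ≤ 0) (hrv : RegVary αb ρb)
    (hc0 : Filter.Tendsto (fun r : ℝ => 2 * r * αb r) Filter.atTop (nhds 0))
    (Γ₁ : (Fin d → ℝ) → ℝ)
    (hΓ₁ : ∀ x : Fin d → ℝ, (∀ j, 0 ≤ x j) →
      Filter.Tendsto (fun r : ℝ => r * (L (fun j => x j + (x j) ^ 2 / r) - L x))
        Filter.atTop (nhds (Γ₁ x))) :
    (∀ x : Fin d → ℝ, (∀ j, 0 ≤ x j) →
      Filter.Tendsto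
        (fun t : ℝ => 2 * t * (t * (1 - C (fun j => 1 - x j / t)) - L x))
        Filter.atTop (nhds (Γ₁ x - (L x) ^ 2))) ∧
    (∃ x : Fin d → ℝ, (∀ j, 0 ≤ x j) ∧ Γ₁ x - (L x) ^ 2 ≠ 0) ∧
    ((∀ T : ℝ, 0 < T → TendstoUniformlyOn
        (fun (t : ℝ) (x : Fin d → ℝ) =>
          2 * t * (t * (1 - C (fun j => 1 - x j / t)) - L x))
        (fun x => Γ₁ x - (L x) ^ 2)
        Filter.atTop (Set.Icc (0 : Fin d → ℝ) (fun _ => T)))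
      ↔ ContinuousOn Γ₁ (Set.Ici (0 : Fin d → ℝ))) ∧
    (SOpot d C L (fun x => Γ₁ x - (L x) ^ 2) (fun t => 1 / (2 * t))
      ↔ ContinuousOn Γ₁ (Set.Ici (0 : Fin d → ℝ))) := by
  
  have hLcont : ContinuousOn L (Set.Ici (0 : Fin d → ℝ)) := st13_L_contOn hC hDOA
  have h2t : Filter.Tendsto (fun t : ℝ => 2 * t) Filter.atTop Filter.atTop :=
    Filter.Tendsto.const_mul_atTop two_pos Filter.tendsto_id
  -- (i) pointwise convergence
  have hpt : ∀ x : Fin d → ℝ, (∀ j, 0 ≤ x j) →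
      Filter.Tendsto
        (fun t : ℝ => 2 * t * (t * (1 - C (fun j => 1 - x j / t)) - L x))
        Filter.atTop (nhds (Γ₁ x - (L x) ^ 2)) := by
    intro x hx
    set T : ℝ := (∑ j, x j) + 1 with hT
    have hsnn : 0 ≤ ∑ j, x j := Finset.sum_nonneg fun j _ => hx j
    have hT0 : 0 < T := by rw [hT]; linarith
    have hxmem : x ∈ Set.Icc (0 : Fin d → ℝ) (fun _ => T) := by
      constructor
      · intro j; exact hx j
      · intro j
        have := Finset.single_le_sum (fun i _ => hx i) (Finset.mem_univ j)
        simp only [hT]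
        linarith
    have hD := (st13_core hd hL hC hDOA hαpos hα0 hScont hSO hc0 T hT0).tendsto_at hxmem
    have hG : Filter.Tendsto
        (fun t : ℝ => (2*t) * (L (fun j => x j + x j ^ 2 / (2*t)) - L x))
        Filter.atTop (nhds (Γ₁ x)) := (hΓ₁ x hx).comp h2t
    have hsum := hD.add hG
    have heqf : (fun t : ℝ =>
        (2 * t * (t * (1 - C (fun j => 1 - x j / t)) - L (fun j => x j + x j ^ 2 / (2 * t)))) +
        ((2*t) * (L (fun j => x j + x j ^ 2 / (2*t)) - L x))) =
        (fun t : ℝ => 2 * t * (t * (1 - C (fun j => 1 - x j / t)) - L x)) := by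
      funext t; ring
    rw [heqf] at hsum
    have hval : -(L x)^2 + Γ₁ x = Γ₁ x - (L x)^2 := by ring
    rwa [hval] at hsum
  -- non-nullity
  have hnonnull : ∃ x : Fin d → ℝ, (∀ j, 0 ≤ x j) ∧ Γ₁ x - (L x) ^ 2 ≠ 0 := by
    by_contra hcon
    push_neg at hcon
    apply st13_nonnull hd hL hLne
    intro x hx
    have h1 := hcon x hx
    have h2 := st13_gamma_le hL x hx (hΓ₁ x hx)
    nlinarith [h1, h2]
  -- uniform iff continuity of Γ₁
  have hUiff : (∀ T : ℝ, 0 < T → TendstoUniformlyOn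
        (fun (t : ℝ) (x : Fin d → ℝ) =>
          2 * t * (t * (1 - C (fun j => 1 - x j / t)) - L x))
        (fun x => Γ₁ x - (L x) ^ 2)
        Filter.atTop (Set.Icc (0 : Fin d → ℝ) (fun _ => T)))
      ↔ ContinuousOn Γ₁ (Set.Ici (0 : Fin d → ℝ)) := by
    constructor
    · intro hU
      intro x hx
      rw [Set.mem_Ici] at hx
      set T : ℝ := (∑ j, x j) + 1 with hT
      have hsnn : 0 ≤ ∑ j, x j := Finset.sum_nonneg fun j _ => hx j
      have hT0 : 0 < T := by rw [hT]; linarith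
      have hxmem : x ∈ Set.Icc (0 : Fin d → ℝ) (fun _ => T) := by
        constructor
        · intro j; exact hx j
        · intro j
          have := Finset.single_le_sum (fun i _ => hx i) (Finset.mem_univ j)
          simp only [hT]
          linarith
      -- each F t is continuous on the box, for t ≥ max T 1
      have hFcont : ∀ᶠ t : ℝ in Filter.atTop, ContinuousOn
          (fun x : Fin d → ℝ => 2 * t * (t * (1 - C (fun j => 1 - x j / t)) - L x))
          (Set.Icc (0 : Fin d → ℝ) (fun _ => T)) := by
        filter_upwards [Filter.eventually_ge_atTop (max T 1)] with t ht
        have ht1 : (1:ℝ) ≤ t := le_trans (le_max_right T 1) ht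
        have htT : T ≤ t := le_trans (le_max_left T 1) ht
        have ht0 : (0:ℝ) < t := by linarith
        have hinner : Continuous (fun x : Fin d → ℝ => (fun j => 1 - x j / t)) :=
          continuous_pi fun j => (by fun_prop)
        have hmaps : Set.MapsTo (fun x : Fin d → ℝ => (fun j => 1 - x j / t))
            (Set.Icc (0 : Fin d → ℝ) (fun _ => T))
            (Set.Icc (0 : Fin d → ℝ) (fun _ => 1)) := by
          intro y hy
          constructor
          · intro j
            have h1 : y j ≤ T := hy.2 j
            have h2 : y j / t ≤ 1 := by
              rw [div_le_one ht0]; linarith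
            simp only [Pi.zero_apply]; linarith
          · intro j
            have h1 : 0 ≤ y j := hy.1 j
            have h2 : 0 ≤ y j / t := by positivity
            simp only; linarith
        have hCcomp : ContinuousOn (fun x : Fin d → ℝ => C (fun j => 1 - x j / t))
            (Set.Icc (0 : Fin d → ℝ) (fun _ => T)) :=
          (st13_C_contOn hC).comp hinner.continuousOn hmaps
        have hLsub : ContinuousOn L (Set.Icc (0 : Fin d → ℝ) (fun _ => T)) :=
          hLcont.mono fun y hy => hy.1
        exact continuousOn_const.mul ((continuousOn_const.mul
          (continuousOn_const.sub hCcomp)).sub hLsub)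
      have hcont1 : ContinuousOn (fun x : Fin d → ℝ => Γ₁ x - (L x) ^ 2)
          (Set.Icc (0 : Fin d → ℝ) (fun _ => T)) :=
        (hU T hT0).continuousOn hFcont.frequently
      have hcont2 : ContinuousOn Γ₁ (Set.Icc (0 : Fin d → ℝ) (fun _ => T)) := by
        have heq : Γ₁ = fun x => (Γ₁ x - (L x) ^ 2) + (L x) ^ 2 := by
          funext y; ring
        rw [heq]
        exact hcont1.add ((hLcont.mono fun y hy => hy.1).pow 2)
      -- pass to Ici
      have hnhds : Set.Icc (0 : Fin d → ℝ) (fun _ => T) ∈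
          nhdsWithin x (Set.Ici (0 : Fin d → ℝ)) := by
        rw [mem_nhdsWithin]
        refine ⟨{y : Fin d → ℝ | ∀ j, y j < T}, ?_, ?_, ?_⟩
        · have : {y : Fin d → ℝ | ∀ j, y j < T} = ⋂ j, {y : Fin d → ℝ | y j < T} := by
            ext y; simp
          rw [this]
          exact isOpen_iInter_of_finite fun j => isOpen_Iio.preimage (continuous_apply j)
        · intro j
          have := Finset.single_le_sum (fun i _ => hx i) (Finset.mem_univ j)
          rw [hT]; linarith
        · intro y hy
          exact ⟨fun j => hy.2 j, fun j => (hy.1 j).le⟩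
      exact (hcont2 x hxmem).mono_of_mem_nhdsWithin hnhds
    · intro hΓcont T hT0
      have hdini := st13_dini hd hL hLcont hΓ₁ hΓcont T
      have hG2 : TendstoUniformlyOn
          (fun (t : ℝ) (x : Fin d → ℝ) => (2*t) * (L (fun j => x j + x j ^ 2 / (2*t)) - L x))
          Γ₁ Filter.atTop (Set.Icc (0 : Fin d → ℝ) (fun _ => T)) := by
        rw [Metric.tendstoUniformlyOn_iff] at hdini ⊢
        intro ε hε
        exact h2t.eventually (hdini ε hε)
      have hcore := st13_core hd hL hC hDOA hαpos hα0 hScont hSO hc0 T hT0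
      have hsum := hcore.add hG2
      have heqf : ∀ t : ℝ, Set.EqOn
          (fun x : Fin d → ℝ =>
            (2 * t * (t * (1 - C (fun j => 1 - x j / t)) - L (fun j => x j + x j ^ 2 / (2 * t)))) +
            ((2*t) * (L (fun j => x j + x j ^ 2 / (2*t)) - L x)))
          (fun x : Fin d → ℝ => 2 * t * (t * (1 - C (fun j => 1 - x j / t)) - L x))
          (Set.Icc (0 : Fin d → ℝ) (fun _ => T)) := by
        intro t y _
        simp only
        ring
      have hsum2 := hsum.congr (Filter.Eventually.of_forall heqf)
      exact hsum2.congr_right (fun y _ => by simp only [Pi.add_apply]; ring)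
  -- SOpot ↔ uniform convergence
  have hSOiff : SOpot d C L (fun x => Γ₁ x - (L x) ^ 2) (fun t => 1 / (2 * t)) ↔
      (∀ T : ℝ, 0 < T → TendstoUniformlyOn
        (fun (t : ℝ) (x : Fin d → ℝ) =>
          2 * t * (t * (1 - C (fun j => 1 - x j / t)) - L x))
        (fun x => Γ₁ x - (L x) ^ 2)
        Filter.atTop (Set.Icc (0 : Fin d → ℝ) (fun _ => T))) := by
    unfold SOpot
    apply forall_congr'
    intro T
    apply imp_congr_right
    intro hT0
    have heqf : ∀ᶠ t : ℝ in Filter.atTop, Set.EqOn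
        (fun x : Fin d → ℝ => (t * (1 - C (fun j => 1 - x j / t)) - L x) / (1 / (2 * t)))
        (fun x : Fin d → ℝ => 2 * t * (t * (1 - C (fun j => 1 - x j / t)) - L x))
        (Set.Icc (0 : Fin d → ℝ) (fun _ => T)) := by
      filter_upwards [Filter.eventually_gt_atTop (0:ℝ)] with t ht
      intro y _
      simp only
      rw [div_div_eq_mul_div, div_one]
      ring
    constructor
    · intro h
      exact h.congr heqf
    · intro h
      apply h.congr
      filter_upwards [heqf] with t ht
      exact fun y hy => (ht hy).symm
  exact ⟨hpt, hnonnull, hUiff, hSOiff.trans hUiff⟩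
end
end

section
/- Let L be a d-variate stable tail dependence function that is componentwise nondecreasing, and let Γ₂(x) = lim_{r→∞} r·(L(x) − L(x − x²/r)) with x² := (x_1²,…,x_d²). Then Γ₂(x) = L(x)² for all x ∈ [0,∞)^d if and only if L = L_∨, where L_∨(x) = max(x_1,…,x_d). -/
open Filter Topology

noncomputable section

/-- for a componentwise nondecreasing stdf `L`, the identity `Γ₂ = L²`
on `[0,∞)^d` holds if and only if `L = L_∨`, the stdf of perfect tail dependence. -/
theorem statement15 {d : ℕ} (hd : 0 < d) (L : (Fin d → ℝ) → ℝ) (hL : IsSTDF d L)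
    (hmono : ∀ x y : Fin d → ℝ, (∀ j, 0 ≤ x j) → (∀ j, x j ≤ y j) → L x ≤ L y)
    (Γ₂ : (Fin d → ℝ) → ℝ)
    (hΓ₂ : ∀ x : Fin d → ℝ, (∀ j, 0 ≤ x j) →
      Filter.Tendsto (fun r : ℝ => r * (L x - L (fun j => x j - (x j) ^ 2 / r)))
        Filter.atTop (nhds (Γ₂ x))) :
    (∀ x : Fin d → ℝ, (∀ j, 0 ≤ x j) → Γ₂ x = (L x) ^ 2) ↔
    (∀ x : Fin d → ℝ, (∀ j, 0 ≤ x j) → L x = ⨆ j, x j) := by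
  obtain ⟨hhom, hconv, hunit, hbd⟩ := hL
  have hne : Nonempty (Fin d) := ⟨⟨0, hd⟩⟩
  constructor
  · -- Γ₂ = L² → L = max
    intro h x hx
    set M := ⨆ j, x j with hM
    have hbdd : BddAbove (Set.range x) := Set.Finite.bddAbove (Set.finite_range x)
    have hxM : ∀ j, x j ≤ M := fun j => le_ciSup hbdd j
    have hML : M ≤ L x := ciSup_le fun j => (hbd x hx).1 j
    have hM0 : 0 ≤ M := le_trans (hx (Classical.arbitrary _)) (hxM _)
    have hLx0 : 0 ≤ L x := hM0.trans hML
    -- key bound: Γ₂ x ≤ M * L x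
    have hev : ∀ᶠ r : ℝ in atTop,
        r * (L x - L (fun j => x j - (x j) ^ 2 / r)) ≤ M * L x := by
      filter_upwards [eventually_ge_atTop (M + 1)] with r hr
      have hr0 : 0 < r := by linarith
      have hs : 0 < 1 - M / r := by
        rw [sub_pos, div_lt_one hr0]; linarith
      have hle : L ((1 - M / r) • x) ≤ L (fun j => x j - (x j) ^ 2 / r) := by
        apply hmono
        · intro j
          simp only [Pi.smul_apply, smul_eq_mul]
          exact mul_nonneg hs.le (hx j)
        · intro j
          simp only [Pi.smul_apply, smul_eq_mul]
          have h1 : (x j) ^ 2 ≤ M * x j := by nlinarith [hx j, hxM j]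
          have h2 : (x j) ^ 2 / r ≤ M * x j / r := by
            exact div_le_div_of_nonneg_right h1 hr0.le |>.trans_eq rfl
          calc (1 - M / r) * x j = x j - M * x j / r := by ring
            _ ≤ x j - (x j) ^ 2 / r := by linarith
      have hhom' : L ((1 - M / r) • x) = (1 - M / r) * L x := hhom _ hs x hx
      have h3 : L x - L (fun j => x j - (x j) ^ 2 / r) ≤ L x - (1 - M / r) * L x := by
        rw [← hhom']; linarith
      calc r * (L x - L (fun j => x j - (x j) ^ 2 / r))
          ≤ r * (L x - (1 - M / r) * L x) := by
            exact mul_le_mul_of_nonneg_left h3 hr0.le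
        _ = M * L x := by field_simp; ring
    have hΓle : Γ₂ x ≤ M * L x := le_of_tendsto (hΓ₂ x hx) hev
    have hsq : (L x) ^ 2 ≤ M * L x := by rw [← h x hx]; exact hΓle
    rcases eq_or_lt_of_le hLx0 with h0 | h0
    · have : M = 0 := le_antisymm (h0 ▸ hML) hM0
      rw [← h0, this]
    · have : L x ≤ M := by nlinarith
      exact le_antisymm this hML
  · -- L = max → Γ₂ = L²
    intro h x hx
    set M := ⨆ j, x j with hM
    have hbdd : BddAbove (Set.range x) := Set.Finite.bddAbove (Set.finite_range x)
    have hxM : ∀ j, x j ≤ M := fun j => le_ciSup hbdd j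
    have hM0 : 0 ≤ M := le_trans (hx (Classical.arbitrary _)) (hxM _)
    obtain ⟨j₀, hj₀⟩ := Finite.exists_max x
    have hMj : M = x j₀ := le_antisymm (ciSup_le hj₀) (le_ciSup hbdd j₀)
    have hLx : L x = M := h x hx
    have hev : ∀ᶠ r : ℝ in atTop,
        r * (L x - L (fun j => x j - (x j) ^ 2 / r)) = M ^ 2 := by
      filter_upwards [eventually_ge_atTop (2 * M + 1)] with r hr
      have hr0 : 0 < r := by linarith
      have hy : ∀ j, 0 ≤ x j - (x j) ^ 2 / r := by
        intro j
        rw [sub_nonneg, div_le_iff₀ hr0]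
        nlinarith [hx j, hxM j]
      have hLy : L (fun j => x j - (x j) ^ 2 / r) = M - M ^ 2 / r := by
        rw [h _ hy]
        apply le_antisymm
        · apply ciSup_le
          intro j
          have hpoly : r * x j - (x j) ^ 2 ≤ r * M - M ^ 2 := by
            nlinarith [mul_nonneg (sub_nonneg.2 (hxM j))
              (by linarith [hx j, hxM j] : (0:ℝ) ≤ r - M - x j)]
          have h4 : (r * x j - (x j) ^ 2) / r ≤ (r * M - M ^ 2) / r :=
            div_le_div_of_nonneg_right hpoly hr0.le |>.trans_eq rfl
          calc x j - (x j) ^ 2 / r = (r * x j - (x j) ^ 2) / r := by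
                field_simp
            _ ≤ (r * M - M ^ 2) / r := h4
            _ = M - M ^ 2 / r := by field_simp
        · have h5 : M - M ^ 2 / r = x j₀ - (x j₀) ^ 2 / r := by rw [hMj]
          rw [h5]
          exact le_ciSup (f := fun j => x j - (x j) ^ 2 / r)
            (Set.Finite.bddAbove (Set.finite_range _)) j₀
      rw [hLy, hLx]
      field_simp
      ring
    have htend : Tendsto (fun r : ℝ => r * (L x - L (fun j => x j - (x j) ^ 2 / r)))
        atTop (nhds (M ^ 2)) :=
      Tendsto.congr' (by filter_upwards [hev] with r hr; exact hr.symm) tendsto_const_nhds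
    have := tendsto_nhds_unique (hΓ₂ x hx) htend
    rw [this, hLx]
end
end

section
/- Let d ≥ 1, let α ∈ (0,1], and let L : [0,∞)^d → [0,∞) satisfy max(x_1,…,x_d) ≤ L(x) for all x and the Lipschitz bound |L(x) − L(y)| ≤ Σ_j |x_j − y_j|. Then the map x ↦ L(x_1^{1/α},…,x_d^{1/α})^α is Lipschitz with respect to the ℓ¹-norm with constant 1: for all x, y ∈ [0,∞)^d, |L(x^{1/α})^α − L(y^{1/α})^α| ≤ Σ_{j=1}^d |x_j − y_j|, where x^{1/α} := (x_1^{1/α},…,x_d^{1/α}). -/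
open Filter Topology

noncomputable section

/-- Concave increments: for `α ∈ (0,1]`, `(b+δ)^α - b^α ≤ (a+δ)^α - a^α` when `0 ≤ a ≤ b`. -/
lemma rpow_increment_antitone {α : ℝ} (h0 : 0 < α) (h1 : α ≤ 1) {a b δ : ℝ}
    (ha : 0 ≤ a) (hab : a ≤ b) (hδ : 0 ≤ δ) :
    (b + δ) ^ α - b ^ α ≤ (a + δ) ^ α - a ^ α := by
  have hconc := Real.concaveOn_rpow h0.le h1
  rcases eq_or_lt_of_le (le_trans hab (le_add_of_nonneg_right hδ) : a ≤ b + δ) with h | h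
  · have hb : a = b := le_antisymm hab (by nlinarith)
    have hδ0 : δ = 0 := by nlinarith
    simp [hb, hδ0]
  · set D : ℝ := b + δ - a with hD
    have hDpos : 0 < D := by simpa [hD] using sub_pos.mpr h
    set t : ℝ := (b - a) / D with ht
    have ht0 : 0 ≤ t := div_nonneg (by linarith) hDpos.le
    have ht1 : t ≤ 1 := by rw [ht, div_le_one hDpos]; linarith
    have hmem1 : a ∈ Set.Ici (0 : ℝ) := ha
    have hmem2 : b + δ ∈ Set.Ici (0 : ℝ) := by simp only [Set.mem_Ici]; linarith
    have htD : t * D = b - a := by rw [ht]; exact div_mul_cancel₀ _ hDpos.ne'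
    have e1 : (1 - t) * a + t * (b + δ) = b := by nlinarith
    have e2 : t * a + (1 - t) * (b + δ) = a + δ := by nlinarith
    have c1 := hconc.2 hmem1 hmem2 (by linarith : (0:ℝ) ≤ 1 - t) ht0 (by ring)
    have c2 := hconc.2 hmem1 hmem2 ht0 (by linarith : (0:ℝ) ≤ 1 - t) (by ring)
    simp only [smul_eq_mul] at c1 c2
    rw [e1] at c1
    rw [e2] at c2
    linarith

/-- Subadditivity of the increments of `x ↦ x^α` over a finite sum. -/
lemma rpow_increment_subadd {α : ℝ} (h0 : 0 < α) (h1 : α ≤ 1) {d : ℕ}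
    (v : ℝ) (hv : 0 ≤ v) (δ : Fin d → ℝ) (hδ : ∀ j, 0 ≤ δ j) (s : Finset (Fin d)) :
    (v + ∑ j ∈ s, δ j) ^ α - v ^ α ≤ ∑ j ∈ s, ((v + δ j) ^ α - v ^ α) := by
  induction s using Finset.cons_induction with
  | empty => simp
  | cons i s hi ih =>
    rw [Finset.sum_cons, Finset.sum_cons]
    have hS : 0 ≤ ∑ j ∈ s, δ j := Finset.sum_nonneg fun j _ => hδ j
    have key : (v + (δ i + ∑ j ∈ s, δ j)) ^ α - (v + ∑ j ∈ s, δ j) ^ α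
        ≤ (v + δ i) ^ α - v ^ α := by
      have := rpow_increment_antitone h0 h1 hv
        (le_add_of_nonneg_right hS : v ≤ v + ∑ j ∈ s, δ j) (hδ i)
      calc (v + (δ i + ∑ j ∈ s, δ j)) ^ α - (v + ∑ j ∈ s, δ j) ^ α
          = ((v + ∑ j ∈ s, δ j) + δ i) ^ α - (v + ∑ j ∈ s, δ j) ^ α := by ring_nf
        _ ≤ (v + δ i) ^ α - v ^ α := this
    linarith

/-- One-sided version of statement 16. -/
lemma statement16_aux {d : ℕ} (hd : 1 ≤ d) (α : ℝ) (hα : α ∈ Set.Ioc (0 : ℝ) 1)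
    (L : (Fin d → ℝ) → ℝ)
    (hmax : ∀ x : Fin d → ℝ, (∀ j, 0 ≤ x j) → ∀ j, x j ≤ L x)
    (hlip : ∀ x y : Fin d → ℝ, (∀ j, 0 ≤ x j) → (∀ j, 0 ≤ y j) →
      |L x - L y| ≤ ∑ j, |x j - y j|) :
    ∀ x y : Fin d → ℝ, (∀ j, 0 ≤ x j) → (∀ j, 0 ≤ y j) →
      L (fun j => x j ^ (1 / α)) ^ α - L (fun j => y j ^ (1 / α)) ^ α
        ≤ ∑ j, |x j - y j| := by
  obtain ⟨h0, h1⟩ := hα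
  intro x y hx hy
  set x' : Fin d → ℝ := fun j => x j ^ (1 / α) with hx'def
  set y' : Fin d → ℝ := fun j => y j ^ (1 / α) with hy'def
  have hx' : ∀ j, 0 ≤ x' j := fun j => Real.rpow_nonneg (hx j) _
  have hy' : ∀ j, 0 ≤ y' j := fun j => Real.rpow_nonneg (hy j) _
  have hinv : ∀ z : ℝ, 0 ≤ z → (z ^ (1 / α)) ^ α = z := by
    intro z hz
    rw [one_div, Real.rpow_inv_rpow hz h0.ne']
  set δ : Fin d → ℝ := fun j => |x' j - y' j| with hδdef
  have hδ : ∀ j, 0 ≤ δ j := fun j => abs_nonneg _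
  set u := L x' with hu
  set v := L y' with hv
  have j0 : Fin d := ⟨0, hd⟩
  have hv0 : 0 ≤ v := le_trans (hy' j0) (hmax y' hy' j0)
  have hu0 : 0 ≤ u := le_trans (hx' j0) (hmax x' hx' j0)
  have huv : u ≤ v + ∑ j, δ j := by
    have := hlip x' y' hx' hy'
    have h2 : u - v ≤ ∑ j, δ j := le_trans (le_abs_self _) this
    linarith
  have step1 : u ^ α ≤ (v + ∑ j, δ j) ^ α := Real.rpow_le_rpow hu0 huv h0.le
  have step2 : (v + ∑ j, δ j) ^ α - v ^ α ≤ ∑ j, ((v + δ j) ^ α - v ^ α) :=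
    rpow_increment_subadd h0 h1 v hv0 δ hδ Finset.univ
  have step3 : ∀ j, (v + δ j) ^ α - v ^ α ≤ |x j - y j| := by
    intro j
    have hvy : y' j ≤ v := hmax y' hy' j
    rcases le_total (x j) (y j) with hxy | hxy
    · have hxy' : x' j ≤ y' j := Real.rpow_le_rpow (hx j) hxy (by positivity)
      have hδj : δ j = y' j - x' j := by
        show |x' j - y' j| = _
        rw [abs_of_nonpos (by linarith : x' j - y' j ≤ 0)]; ring
      have hvx : x' j ≤ v := le_trans hxy' hvy
      have := rpow_increment_antitone h0 h1 (hx' j) hvx (hδ j)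
      have heq : (x' j + δ j) ^ α - (x' j) ^ α = y j - x j := by
        rw [hδj]
        have : x' j + (y' j - x' j) = y' j := by ring
        rw [this, hinv _ (hy j), hinv _ (hx j)]
      rw [abs_of_nonpos (by linarith : x j - y j ≤ 0)]
      linarith
    · have hxy' : y' j ≤ x' j := Real.rpow_le_rpow (hy j) hxy (by positivity)
      have hδj : δ j = x' j - y' j := by
        show |x' j - y' j| = _
        exact abs_of_nonneg (by linarith)
      have := rpow_increment_antitone h0 h1 (hy' j) hvy (hδ j)
      have heq : (y' j + δ j) ^ α - (y' j) ^ α = x j - y j := by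
        rw [hδj]
        have : y' j + (x' j - y' j) = x' j := by ring
        rw [this, hinv _ (hx j), hinv _ (hy j)]
      rw [abs_of_nonneg (by linarith : 0 ≤ x j - y j)]
      linarith
  calc u ^ α - v ^ α ≤ (v + ∑ j, δ j) ^ α - v ^ α := by linarith
    _ ≤ ∑ j, ((v + δ j) ^ α - v ^ α) := step2
    _ ≤ ∑ j, |x j - y j| := Finset.sum_le_sum fun j _ => step3 j

/-- the map `x ↦ L(x^{1/α})^α` is ℓ¹-Lipschitz with constant 1 on the
nonnegative orthant, whenever `max_j x_j ≤ L(x)` and `L` is ℓ¹-Lipschitz with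
constant 1, and `α ∈ (0,1]`. -/
theorem statement16 {d : ℕ} (hd : 1 ≤ d) (α : ℝ) (hα : α ∈ Set.Ioc (0 : ℝ) 1)
    (L : (Fin d → ℝ) → ℝ)
    (hmax : ∀ x : Fin d → ℝ, (∀ j, 0 ≤ x j) → ∀ j, x j ≤ L x)
    (hlip : ∀ x y : Fin d → ℝ, (∀ j, 0 ≤ x j) → (∀ j, 0 ≤ y j) →
      |L x - L y| ≤ ∑ j, |x j - y j|) :
    ∀ x y : Fin d → ℝ, (∀ j, 0 ≤ x j) → (∀ j, 0 ≤ y j) →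
      |L (fun j => x j ^ (1 / α)) ^ α - L (fun j => y j ^ (1 / α)) ^ α|
        ≤ ∑ j, |x j - y j| := by
  intro x y hx hy
  rw [abs_sub_le_iff]
  constructor
  · exact statement16_aux hd α hα L hmax hlip x y hx hy
  · have := statement16_aux hd α hα L hmax hlip y x hy hx
    simpa [abs_sub_comm] using this
end
end
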